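/- arXiv:2110.02716 — 2 statements merged into one kernel-verified Lean document; each statement's English description precedes it below -/
import Mathlib

section
/- Let μ and ν be probability measures on ℝ with μ atomless, with CDFs F and G respectively, and let G⁻¹(u) = inf{z : G(z) > u}. Then the map T = G⁻¹ ∘ F satisfies T_#μ = ν. -/
open MeasureTheory Set Filter Topology

private lemma cdf_mono (μ : Measure ℝ) [IsProbabilityMeasure μ] (F : ℝ → ℝ)
    (hF : ∀ x, F x = (μ (Iic x)).toReal) : Monotone F := fun a b hab => by
  rw [hF, hF]
  exact ENNReal.toReal_mono (measure_ne_top _ _) (measure_mono (Iic_subset_Iic.2 hab))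

private lemma cdf_nonneg' (μ : Measure ℝ) (F : ℝ → ℝ)
    (hF : ∀ x, F x = (μ (Iic x)).toReal) (x : ℝ) : 0 ≤ F x := by
  rw [hF]; exact ENNReal.toReal_nonneg

private lemma cdf_ofReal (μ : Measure ℝ) [IsProbabilityMeasure μ] (F : ℝ → ℝ)
    (hF : ∀ x, F x = (μ (Iic x)).toReal) (x : ℝ) :
    μ (Iic x) = ENNReal.ofReal (F x) := by
  rw [hF, ENNReal.ofReal_toReal (measure_ne_top _ _)]

private lemma cdf_le_one' (μ : Measure ℝ) [IsProbabilityMeasure μ] (F : ℝ → ℝ)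
    (hF : ∀ x, F x = (μ (Iic x)).toReal) (x : ℝ) : F x ≤ 1 := by
  rw [hF]
  exact ENNReal.toReal_le_of_le_ofReal zero_le_one (by simpa using prob_le_one)

private lemma cdf_tendsto_atTop (μ : Measure ℝ) [IsProbabilityMeasure μ] (F : ℝ → ℝ)
    (hF : ∀ x, F x = (μ (Iic x)).toReal) : Tendsto F atTop (𝓝 1) := by
  have h := tendsto_measure_Iic_atTop (μ := μ)
  have h2 : Tendsto (fun x : ℝ => (μ (Iic x)).toReal) atTop (𝓝 (μ univ).toReal) :=
    (ENNReal.tendsto_toReal (measure_ne_top _ _)).comp h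
  have : F = fun x => (μ (Iic x)).toReal := funext hF
  rw [this]
  simpa [measure_univ] using h2

private lemma cdf_tendsto_atBot (μ : Measure ℝ) [IsProbabilityMeasure μ] (F : ℝ → ℝ)
    (hF : ∀ x, F x = (μ (Iic x)).toReal) : Tendsto F atBot (𝓝 0) := by
  have h : Tendsto (μ ∘ fun x : ℝ => Iic x) atBot (𝓝 (μ (⋂ x : ℝ, Iic x))) :=
    tendsto_measure_iInter_atBot (fun _ => measurableSet_Iic.nullMeasurableSet)
      monotone_Iic ⟨0, measure_ne_top _ _⟩
  have hempty : (⋂ x : ℝ, Iic x) = (∅ : Set ℝ) := by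
    ext y
    simp only [mem_iInter, mem_Iic, mem_empty_iff_false, iff_false, not_forall, not_le]
    exact ⟨y - 1, by linarith⟩
  rw [hempty] at h
  simp only [measure_empty] at h
  have h2 : Tendsto (fun x : ℝ => (μ (Iic x)).toReal) atBot (𝓝 ((0 : ENNReal)).toReal) :=
    (ENNReal.tendsto_toReal (by simp)).comp h
  have : F = fun x => (μ (Iic x)).toReal := funext hF
  rw [this]
  simpa using h2

private lemma cdf_tendsto_right (μ : Measure ℝ) [IsProbabilityMeasure μ] (F : ℝ → ℝ)
    (hF : ∀ x, F x = (μ (Iic x)).toReal) (x : ℝ) :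
    Tendsto (fun n : ℕ => F (x + 1 / (n + 1))) atTop (𝓝 (F x)) := by
  have hanti : Antitone (fun n : ℕ => Iic (x + 1 / ((n : ℝ) + 1))) := by
    intro n m hnm
    refine Iic_subset_Iic.2 ?_
    have : (1 : ℝ) / (m + 1) ≤ 1 / (n + 1) := by
      apply one_div_le_one_div_of_le (by positivity)
      exact_mod_cast Nat.succ_le_succ hnm
    linarith
  have h : Tendsto (μ ∘ fun n : ℕ => Iic (x + 1 / ((n : ℝ) + 1))) atTop
      (𝓝 (μ (⋂ n : ℕ, Iic (x + 1 / ((n : ℝ) + 1))))) :=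
    tendsto_measure_iInter_atTop (fun _ => measurableSet_Iic.nullMeasurableSet)
      hanti ⟨0, measure_ne_top _ _⟩
  have hint : (⋂ n : ℕ, Iic (x + 1 / ((n : ℝ) + 1))) = Iic x := by
    ext y
    simp only [mem_iInter, mem_Iic]
    constructor
    · intro hy
      have hlim : Tendsto (fun n : ℕ => x + 1 / ((n : ℝ) + 1)) atTop (𝓝 (x + 0)) :=
        tendsto_const_nhds.add tendsto_one_div_add_atTop_nhds_zero_nat
      rw [add_zero] at hlim
      exact ge_of_tendsto hlim (Eventually.of_forall hy)
    · intro hy n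
      have : (0 : ℝ) < 1 / ((n : ℝ) + 1) := by positivity
      linarith
  rw [hint] at h
  have h2 : Tendsto (fun n : ℕ => (μ (Iic (x + 1 / ((n : ℝ) + 1)))).toReal) atTop
      (𝓝 (μ (Iic x)).toReal) := (ENNReal.tendsto_toReal (measure_ne_top _ _)).comp h
  simp only [hF]
  exact h2

private lemma cdf_tendsto_left (μ : Measure ℝ) [IsProbabilityMeasure μ] [NullSingletonClass μ] (F : ℝ → ℝ)
    (hF : ∀ x, F x = (μ (Iic x)).toReal) (x : ℝ) :
    Tendsto (fun n : ℕ => F (x - 1 / (n + 1))) atTop (𝓝 (F x)) := by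
  have hmono : Monotone (fun n : ℕ => Iic (x - 1 / ((n : ℝ) + 1))) := by
    intro n m hnm
    refine Iic_subset_Iic.2 ?_
    have : (1 : ℝ) / (m + 1) ≤ 1 / (n + 1) := by
      apply one_div_le_one_div_of_le (by positivity)
      exact_mod_cast Nat.succ_le_succ hnm
    linarith
  have h : Tendsto (μ ∘ fun n : ℕ => Iic (x - 1 / ((n : ℝ) + 1))) atTop
      (𝓝 (μ (⋃ n : ℕ, Iic (x - 1 / ((n : ℝ) + 1))))) :=
    tendsto_measure_iUnion_atTop hmono
  have hint : (⋃ n : ℕ, Iic (x - 1 / ((n : ℝ) + 1))) = Iio x := by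
    ext y
    simp only [mem_iUnion, mem_Iic, mem_Iio]
    constructor
    · rintro ⟨n, hn⟩
      have : (0 : ℝ) < 1 / ((n : ℝ) + 1) := by positivity
      linarith
    · intro hy
      have hlim : Tendsto (fun n : ℕ => (1 : ℝ) / ((n : ℝ) + 1)) atTop (𝓝 0) :=
        tendsto_one_div_add_atTop_nhds_zero_nat
      have := (hlim.eventually_lt_const (by linarith : (0:ℝ) < x - y)).exists
      obtain ⟨n, hn⟩ := this
      exact ⟨n, by linarith⟩
  rw [hint, measure_congr (Iio_ae_eq_Iic (a := x))] at h
  have h2 : Tendsto (fun n : ℕ => (μ (Iic (x - 1 / ((n : ℝ) + 1)))).toReal) atTop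
      (𝓝 (μ (Iic x)).toReal) := (ENNReal.tendsto_toReal (measure_ne_top _ _)).comp h
  simp only [hF]
  exact h2

/-- Surjectivity of a continuous CDF onto (0,1). -/
private lemma cdf_surj (μ : Measure ℝ) [IsProbabilityMeasure μ] [NullSingletonClass μ] (F : ℝ → ℝ)
    (hF : ∀ x, F x = (μ (Iic x)).toReal) {s : ℝ} (hs0 : 0 < s) (hs1 : s < 1) :
    ∃ a : ℝ, F a = s := by
  set S := {y : ℝ | s ≤ F y} with hS
  have hne : S.Nonempty := by
    obtain ⟨y, hy⟩ := ((cdf_tendsto_atTop μ F hF).eventually_const_lt hs1).exists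
    exact ⟨y, hy.le⟩
  have hbdd : BddBelow S := by
    obtain ⟨z₀, hz₀⟩ := eventually_atBot.1 ((cdf_tendsto_atBot μ F hF).eventually_lt_const hs0)
    exact ⟨z₀, fun y hy => le_of_not_gt fun hlt => absurd hy (by simp [hS]; exact hz₀ y hlt.le)⟩
  set a := sInf S with ha
  have h1 : s ≤ F a := by
    refine ge_of_tendsto (cdf_tendsto_right μ F hF a) (Eventually.of_forall fun n => ?_)
    have hlt : sInf S < a + 1 / ((n : ℝ) + 1) := by
      have : (0 : ℝ) < 1 / ((n : ℝ) + 1) := by positivity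
      linarith
    obtain ⟨y, hyS, hy⟩ := exists_lt_of_csInf_lt hne hlt
    exact le_trans hyS (cdf_mono μ F hF hy.le)
  have h2 : F a ≤ s := by
    refine le_of_tendsto (cdf_tendsto_left μ F hF a) (Eventually.of_forall fun n => ?_)
    have hnot : a - 1 / ((n : ℝ) + 1) ∉ S := fun hmem => by
      have := csInf_le hbdd hmem
      have hpos : (0 : ℝ) < 1 / ((n : ℝ) + 1) := by positivity
      rw [← ha] at this; linarith
    exact (not_le.1 fun h => hnot h).le
  exact ⟨a, le_antisymm h2 h1⟩

/-- upper bound: μ {F ≤ t} ≤ ofReal t for 0 ≤ t < 1 -/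
private lemma cdf_level_le (μ : Measure ℝ) [IsProbabilityMeasure μ] [NullSingletonClass μ] (F : ℝ → ℝ)
    (hF : ∀ x, F x = (μ (Iic x)).toReal) {t : ℝ} (ht0 : 0 ≤ t) (ht1 : t < 1) :
    μ {y | F y ≤ t} ≤ ENNReal.ofReal t := by
  by_contra hcon
  push_neg at hcon
  set S := {y : ℝ | F y ≤ t}
  have hne : μ S ≠ ⊤ := measure_ne_top _ _
  have htlt : t < (μ S).toReal := (ENNReal.ofReal_lt_iff_lt_toReal ht0 hne).1 hcon
  have hle1 : (μ S).toReal ≤ 1 :=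
    ENNReal.toReal_le_of_le_ofReal zero_le_one (by simpa using prob_le_one)
  set s := (t + (μ S).toReal) / 2 with hs
  have hs0 : 0 < s := by simp only [hs]; linarith
  have hst : t < s := by simp only [hs]; linarith
  have hsm : s < (μ S).toReal := by simp only [hs]; linarith
  have hs1 : s < 1 := lt_of_lt_of_le hsm hle1
  obtain ⟨a, hFa⟩ := cdf_surj μ F hF hs0 hs1
  have hsub : S ⊆ Iic a := fun y hy => mem_Iic.2 (le_of_not_gt fun hya => by
    have h2 := cdf_mono μ F hF hya.le
    rw [hFa] at h2
    have h3 : F y ≤ t := hy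
    linarith)
  have : μ S ≤ ENNReal.ofReal s := by
    calc μ S ≤ μ (Iic a) := measure_mono hsub
      _ = ENNReal.ofReal (F a) := cdf_ofReal μ F hF a
      _ = ENNReal.ofReal s := by rw [hFa]
  have hlt : ENNReal.ofReal s < μ S := (ENNReal.ofReal_lt_iff_lt_toReal hs0.le hne).2 hsm
  exact absurd this (not_le.2 hlt)

/-- lower bound: ofReal t ≤ μ {F < t} for 0 ≤ t ≤ 1 -/
private lemma cdf_level_ge (μ : Measure ℝ) [IsProbabilityMeasure μ] [NullSingletonClass μ] (F : ℝ → ℝ)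
    (hF : ∀ x, F x = (μ (Iic x)).toReal) {t : ℝ} (ht0 : 0 ≤ t) (ht1 : t ≤ 1) :
    ENNReal.ofReal t ≤ μ {y | F y < t} := by
  by_contra hcon
  push_neg at hcon
  set S := {y : ℝ | F y < t}
  have hne : μ S ≠ ⊤ := measure_ne_top _ _
  have htgt : (μ S).toReal < t := (ENNReal.lt_ofReal_iff_toReal_lt hne).1 hcon
  have ht0' : 0 < t := lt_of_le_of_lt ENNReal.toReal_nonneg htgt
  set s := ((μ S).toReal + t) / 2 with hs
  have hs0 : 0 < s := by
    have : (0:ℝ) ≤ (μ S).toReal := ENNReal.toReal_nonneg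
    simp only [hs]; linarith
  have hsm : (μ S).toReal < s := by simp only [hs]; linarith
  have hst : s < t := by simp only [hs]; linarith
  have hs1 : s < 1 := lt_of_lt_of_le hst ht1
  obtain ⟨a, hFa⟩ := cdf_surj μ F hF hs0 hs1
  have hsub : Iic a ⊆ S := fun y hy => by
    have := cdf_mono μ F hF (mem_Iic.1 hy)
    rw [hFa] at this
    simp only [S, mem_setOf_eq]; linarith
  have hge : ENNReal.ofReal s ≤ μ S := by
    calc ENNReal.ofReal s = ENNReal.ofReal (F a) := by rw [hFa]
      _ = μ (Iic a) := (cdf_ofReal μ F hF a).symm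
      _ ≤ μ S := measure_mono hsub
  have hlt : μ S < ENNReal.ofReal s := (ENNReal.lt_ofReal_iff_toReal_lt hne).2 hsm
  exact absurd hge (not_le.2 hlt)

/-- One-dimensional monotone transport: `T = G⁻¹ ∘ F` pushes the atomless measure `μ`
with CDF `F` onto the measure `ν` with CDF `G`. -/
theorem monotone_transport_pushforward (μ ν : Measure ℝ)
    [IsProbabilityMeasure μ] [IsProbabilityMeasure ν] [NullSingletonClass μ]
    (F G : ℝ → ℝ) (hF : ∀ x, F x = (μ (Iic x)).toReal) (hG : ∀ x, G x = (ν (Iic x)).toReal)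
    (Ginv : ℝ → ℝ) (hGinv : ∀ u, Ginv u = sInf {z : ℝ | G z > u}) :
    μ.map (Ginv ∘ F) = ν := by
  set T : ℝ → ℝ := Ginv ∘ F with hT
  have hGmono := cdf_mono ν G hG
  have hFmono := cdf_mono μ F hF
  have hFmeas : Measurable F := hFmono.measurable
  -- nonemptiness and boundedness of the level sets of G
  have hSne : ∀ u : ℝ, u < 1 → {z : ℝ | G z > u}.Nonempty := fun u hu =>
    ((cdf_tendsto_atTop ν G hG).eventually_const_lt hu).exists
  have hSbdd : ∀ u : ℝ, 0 < u → BddBelow {z : ℝ | G z > u} := fun u hu => by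
    obtain ⟨z₀, hz₀⟩ := eventually_atBot.1 ((cdf_tendsto_atBot ν G hG).eventually_lt_const hu)
    exact ⟨z₀, fun z hz => le_of_not_gt fun hlt => absurd hz (by
      simp only [mem_setOf_eq, gt_iff_lt, not_lt]
      exact (hz₀ z hlt.le).le)⟩
  -- the good set E
  set E : Set ℝ := F ⁻¹' (Ioo 0 1) with hE
  have hEmeas : MeasurableSet E := hFmeas measurableSet_Ioo
  have hEc : μ Eᶜ = 0 := by
    have h1 : μ {y | F y ≤ 0} = 0 :=
      le_antisymm (by simpa using cdf_level_le μ F hF le_rfl one_pos) zero_le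
    have hlt1 : μ {y | F y < 1} = 1 :=
      le_antisymm prob_le_one (by simpa using cdf_level_ge μ F hF zero_le_one le_rfl)
    have h2 : μ ({y | F y < 1}ᶜ) = 0 := by
      rw [measure_compl (measurableSet_lt hFmeas measurable_const) (measure_ne_top _ _), hlt1, measure_univ,
        tsub_self]
    have hsub : Eᶜ ⊆ {y | F y ≤ 0} ∪ {y | F y < 1}ᶜ := by
      intro y hy
      simp only [hE, mem_compl_iff, mem_preimage, mem_Ioo, not_and_or, not_lt] at hy
      rcases hy with hy | hy
      · exact Or.inl hy
      · exact Or.inr (by simp only [mem_compl_iff, mem_setOf_eq, not_lt]; exact hy)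
    exact le_antisymm (le_trans (measure_mono hsub)
      (le_trans (measure_union_le _ _) (by rw [h1, h2, add_zero]))) zero_le
  -- monotonicity of T on E, hence a.e. measurability
  have hTmonoOn : MonotoneOn T E := by
    intro y₁ h₁ y₂ h₂ h12
    simp only [hE, mem_preimage, mem_Ioo] at h₁ h₂
    simp only [hT, Function.comp_apply, hGinv]
    exact csInf_le_csInf (hSbdd _ h₁.1) (hSne _ h₂.2)
      (fun z hz => lt_of_le_of_lt (hFmono h12) hz)
  have hTaem : AEMeasurable T μ := by
    have := aemeasurable_restrict_of_monotoneOn (μ := μ) hEmeas hTmonoOn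
    rwa [Measure.restrict_eq_self_of_ae_mem (by
      rw [MeasureTheory.ae_iff]
      exact hEc)] at this
  have : IsProbabilityMeasure (μ.map T) := Measure.isProbabilityMeasure_map hTaem
  refine Measure.ext_of_Iic (μ.map T) ν fun x => ?_
  rw [Measure.map_apply_of_aemeasurable hTaem measurableSet_Iic]
  have hGx0 : 0 ≤ G x := cdf_nonneg' ν G hG x
  have hGx1 : G x ≤ 1 := cdf_le_one' ν G hG x
  -- inclusion 1: {F < G x} ∩ E ⊆ T⁻¹(Iic x)
  have hsub1 : {y | F y < G x} ∩ E ⊆ T ⁻¹' (Iic x) := by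
    rintro y ⟨hy1, hy2⟩
    simp only [hE, mem_preimage, mem_Ioo] at hy2
    simp only [mem_preimage, mem_Iic, hT, Function.comp_apply, hGinv]
    exact csInf_le (hSbdd _ hy2.1) hy1
  -- inclusion 2: T⁻¹(Iic x) ∩ E ⊆ {F ≤ G x}
  have hsub2 : T ⁻¹' (Iic x) ∩ E ⊆ {y | F y ≤ G x} := by
    rintro y ⟨hy1, hy2⟩
    simp only [hE, mem_preimage, mem_Ioo] at hy2
    simp only [mem_preimage, mem_Iic, hT, Function.comp_apply, hGinv] at hy1
    show F y ≤ G x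
    refine ge_of_tendsto (cdf_tendsto_right ν G hG x) (Eventually.of_forall fun n => ?_)
    have hlt : sInf {z : ℝ | G z > F y} < x + 1 / ((n : ℝ) + 1) := by
      have : (0 : ℝ) < 1 / ((n : ℝ) + 1) := by positivity
      linarith
    obtain ⟨z, hzS, hz⟩ := exists_lt_of_csInf_lt (hSne _ hy2.2) hlt
    exact le_trans (le_of_lt hzS) (hGmono hz.le)
  -- squeeze
  have hinterE : ∀ s : Set ℝ, μ (s ∩ E) = μ s := fun s => measure_inter_conull hEc
  have hub : μ (T ⁻¹' Iic x) ≤ ENNReal.ofReal (G x) := by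
    rw [← hinterE (T ⁻¹' Iic x)]
    refine le_trans (measure_mono hsub2) ?_
    rcases lt_or_ge (G x) 1 with h | h
    · exact cdf_level_le μ F hF hGx0 h
    · calc μ {y | F y ≤ G x} ≤ 1 := prob_le_one
        _ = ENNReal.ofReal 1 := by simp
        _ ≤ ENNReal.ofReal (G x) := ENNReal.ofReal_le_ofReal h
  have hlb : ENNReal.ofReal (G x) ≤ μ (T ⁻¹' Iic x) := by
    calc ENNReal.ofReal (G x) ≤ μ {y | F y < G x} := cdf_level_ge μ F hF hGx0 hGx1
      _ = μ ({y | F y < G x} ∩ E) := (hinterE _).symm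
      _ ≤ μ (T ⁻¹' Iic x) := measure_mono hsub1
  rw [le_antisymm hub hlb, ← cdf_ofReal ν G hG]
end

section
/- For probability measures μ, ν on ℝ with CDFs F, G, the monotone map T = G⁻¹ ∘ F is an optimal transport map for the quadratic cost: among all maps S with S_#μ = ν, T minimizes ∫ |x - S(x)|² dμ(x), assuming μ is atomless and all integrals are finite. -/
open MeasureTheory Set Filter ProbabilityTheory
open scoped Topology

lemma mto_G_eq {ν : Measure ℝ} [IsProbabilityMeasure ν] {G : ℝ → ℝ}
    (hG : ∀ x, G x = (ν (Iic x)).toReal) : G = (cdf ν : ℝ → ℝ) :=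
  funext fun y => by rw [hG, cdf_eq_real, measureReal_def]

lemma mto_bddBelow {ν : Measure ℝ} [IsProbabilityMeasure ν] {G : ℝ → ℝ}
    (hG : ∀ x, G x = (ν (Iic x)).toReal) {u : ℝ} (hu : 0 < u) :
    BddBelow {z | G z > u} := by
  rw [mto_G_eq hG]
  have h0 : Tendsto (cdf ν) atBot (𝓝 0) := tendsto_cdf_atBot ν
  obtain ⟨z₀, hz₀⟩ := (h0.eventually_lt_const hu).exists_forall_of_atBot
  refine ⟨z₀, fun z hz => ?_⟩
  by_contra hlt
  push_neg at hlt
  exact absurd hz (not_lt.mpr (hz₀ z hlt.le).le)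

lemma mto_nonempty {ν : Measure ℝ} [IsProbabilityMeasure ν] {G : ℝ → ℝ}
    (hG : ∀ x, G x = (ν (Iic x)).toReal) {u : ℝ} (hu : u < 1) :
    {z | G z > u}.Nonempty := by
  rw [mto_G_eq hG]
  have h1 : Tendsto (cdf ν) atTop (𝓝 1) := tendsto_cdf_atTop ν
  exact (h1.eventually_const_lt hu).exists

lemma mto_monotone_G {ν : Measure ℝ} [IsProbabilityMeasure ν] {G : ℝ → ℝ}
    (hG : ∀ x, G x = (ν (Iic x)).toReal) : Monotone G := by
  rw [mto_G_eq hG]; exact monotone_cdf ν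

lemma mto_F_pos {μ : Measure ℝ} [IsProbabilityMeasure μ] {F : ℝ → ℝ}
    (hF : ∀ x, F x = (μ (Iic x)).toReal) (hFm : StrictMono F) (x : ℝ) : 0 < F x := by
  have h := hFm (show x - 1 < x by linarith)
  have h0 : 0 ≤ F (x - 1) := by rw [hF]; positivity
  linarith

lemma mto_F_lt_one {μ : Measure ℝ} [IsProbabilityMeasure μ] {F : ℝ → ℝ}
    (hF : ∀ x, F x = (μ (Iic x)).toReal) (hFm : StrictMono F) (x : ℝ) : F x < 1 := by
  have h := hFm (show x < x + 1 by linarith)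
  have h1 : F (x + 1) ≤ 1 := by
    rw [hF]
    exact ENNReal.toReal_le_of_le_ofReal zero_le_one (by simpa using prob_le_one)
  linarith

/-- If `F x < G y` then `Ginv (F x) ≤ y`. -/
lemma mto_A1 {μ ν : Measure ℝ} [IsProbabilityMeasure μ] [IsProbabilityMeasure ν]
    {F G Ginv : ℝ → ℝ}
    (hF : ∀ x, F x = (μ (Iic x)).toReal) (hG : ∀ x, G x = (ν (Iic x)).toReal)
    (hFm : StrictMono F) (hGinv : ∀ u, Ginv u = sInf {z : ℝ | G z > u})
    {x y : ℝ} (h : F x < G y) : Ginv (F x) ≤ y := by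
  rw [hGinv]
  exact csInf_le (mto_bddBelow hG (mto_F_pos hF hFm x)) h

/-- If `Ginv (F x) ≤ y` then `F x ≤ G y`. -/
lemma mto_A2 {μ ν : Measure ℝ} [IsProbabilityMeasure μ] [IsProbabilityMeasure ν]
    {F G Ginv : ℝ → ℝ}
    (hF : ∀ x, F x = (μ (Iic x)).toReal) (hG : ∀ x, G x = (ν (Iic x)).toReal)
    (hFm : StrictMono F) (hGinv : ∀ u, Ginv u = sInf {z : ℝ | G z > u})
    {x y : ℝ} (h : Ginv (F x) ≤ y) : F x ≤ G y := by
  have hne := mto_nonempty hG (mto_F_lt_one hF hFm x)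
  have key : ∀ ε > (0:ℝ), F x ≤ G (y + ε) := by
    intro ε hε
    have hlt : sInf {z : ℝ | G z > F x} < y + ε := by
      rw [hGinv] at h; linarith
    obtain ⟨z, hz, hzlt⟩ := exists_lt_of_csInf_lt hne hlt
    exact le_trans hz.le (mto_monotone_G hG hzlt.le)
  -- right continuity of G
  have hGc : ContinuousWithinAt (cdf ν) (Ici y) y := (cdf ν).right_continuous y
  have hseq : Tendsto (fun n : ℕ => y + 1 / (n + 1)) atTop (𝓝[Ici y] y) := by
    refine tendsto_nhdsWithin_of_tendsto_nhds_of_eventually_within _ ?_ ?_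
    · have : Tendsto (fun n : ℕ => 1 / ((n:ℝ) + 1)) atTop (𝓝 0) := tendsto_one_div_add_atTop_nhds_zero_nat
      simpa using tendsto_const_nhds.add this
    · filter_upwards with n
      have : (0:ℝ) ≤ 1 / (n + 1) := by positivity
      simp only [mem_Ici]; linarith
  have hlim : Tendsto (fun n : ℕ => G (y + 1 / (n + 1))) atTop (𝓝 (G y)) := by
    rw [mto_G_eq hG]
    exact hGc.tendsto.comp hseq
  refine ge_of_tendsto hlim ?_
  filter_upwards with n
  exact key _ (by positivity)

lemma mto_monotone_T {μ ν : Measure ℝ} [IsProbabilityMeasure μ] [IsProbabilityMeasure ν]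
    {F G Ginv T : ℝ → ℝ}
    (hF : ∀ x, F x = (μ (Iic x)).toReal) (hG : ∀ x, G x = (ν (Iic x)).toReal)
    (hFm : StrictMono F) (hGinv : ∀ u, Ginv u = sInf {z : ℝ | G z > u})
    (hT : T = Ginv ∘ F) : Monotone T := by
  intro x x' hxx'
  rw [hT]
  simp only [Function.comp_apply, hGinv]
  refine csInf_le_csInf (mto_bddBelow hG (mto_F_pos hF hFm x))
    (mto_nonempty hG (mto_F_lt_one hF hFm x')) ?_
  intro z hz
  exact lt_of_le_of_lt (hFm.monotone hxx') hz

lemma mto_measure_singleton {μ : Measure ℝ} [IsProbabilityMeasure μ] {F : ℝ → ℝ}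
    (hF : ∀ x, F x = (μ (Iic x)).toReal) (hFc : Continuous F) (x₀ : ℝ) :
    μ {x₀} = 0 := by
  have hrec : ∀ n : ℕ, (μ {x₀}).toReal ≤ F x₀ - F (x₀ - 1 / (n + 1)) := by
    intro n
    have hd : (0:ℝ) < 1 / (n + 1) := by positivity
    have hsub : {x₀} ⊆ Ioc (x₀ - 1 / (n + 1)) x₀ := by
      intro z hz
      simp only [mem_singleton_iff] at hz
      subst hz
      exact ⟨by linarith, le_refl _⟩
    have hmono : μ {x₀} ≤ μ (Ioc (x₀ - 1 / (n + 1)) x₀) := measure_mono hsub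
    have hunion : Iic (x₀ - 1 / (n + 1)) ∪ Ioc (x₀ - 1 / (n + 1)) x₀ = Iic x₀ :=
      Iic_union_Ioc_eq_Iic (by linarith)
    have hdisj : Disjoint (Iic (x₀ - 1 / (n + 1))) (Ioc (x₀ - 1 / (n + 1)) x₀) :=
      Iic_disjoint_Ioc le_rfl
    have hmeas : μ (Iic (x₀ - 1 / (n + 1))) + μ (Ioc (x₀ - 1 / (n + 1)) x₀) = μ (Iic x₀) := by
      rw [← measure_union hdisj measurableSet_Ioc, hunion]
    have h1 : (μ (Ioc (x₀ - 1 / (n + 1)) x₀)).toReal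
        = F x₀ - F (x₀ - 1 / (n + 1)) := by
      rw [hF, hF, ← ENNReal.toReal_sub_of_le]
      · congr 1
        rw [← hmeas]
        simp [ENNReal.add_sub_cancel_left (measure_ne_top μ _)]
      · rw [← hmeas]; exact le_self_add
      · exact measure_ne_top μ _
    rw [← h1]
    exact ENNReal.toReal_mono (measure_ne_top μ _) hmono
  have hlim : Tendsto (fun n : ℕ => F x₀ - F (x₀ - 1 / (n + 1))) atTop (𝓝 0) := by
    have h1 : Tendsto (fun n : ℕ => x₀ - 1 / (n + 1)) atTop (𝓝 x₀) := by
      have : Tendsto (fun n : ℕ => 1 / ((n:ℝ) + 1)) atTop (𝓝 0) := tendsto_one_div_add_atTop_nhds_zero_nat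
      simpa using tendsto_const_nhds.sub this
    have h2 : Tendsto (fun n : ℕ => F (x₀ - 1 / (n + 1))) atTop (𝓝 (F x₀)) :=
      (hFc.tendsto x₀).comp h1
    have h3 : Tendsto (fun n : ℕ => F x₀ - F (x₀ - 1 / (n + 1))) atTop (𝓝 (F x₀ - F x₀)) :=
      tendsto_const_nhds.sub h2
    rwa [sub_self] at h3
  have : (μ {x₀}).toReal ≤ 0 := ge_of_tendsto hlim (Eventually.of_forall hrec)
  have h0 : (μ {x₀}).toReal = 0 := le_antisymm this ENNReal.toReal_nonneg
  exact (ENNReal.toReal_eq_zero_iff _).mp h0 |>.resolve_right (measure_ne_top μ _)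

/-- F pushes μ to the uniform law on (0,1): measure of sublevel sets. -/
lemma mto_uniform {μ : Measure ℝ} [IsProbabilityMeasure μ] {F : ℝ → ℝ}
    (hF : ∀ x, F x = (μ (Iic x)).toReal) (hFc : Continuous F) (hFm : StrictMono F)
    {u : ℝ} (hu0 : 0 ≤ u) (hu1 : u ≤ 1) :
    μ {x | F x ≤ u} = ENNReal.ofReal u ∧ μ {x | F x < u} = ENNReal.ofReal u := by
  rcases eq_or_lt_of_le hu0 with h0 | h0
  · subst h0
    have he : {x | F x ≤ (0:ℝ)} = ∅ := by
      ext x; simp only [mem_setOf_eq, mem_empty_iff_false, iff_false, not_le]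
      exact mto_F_pos hF hFm x
    have he' : {x | F x < (0:ℝ)} = ∅ := by
      ext x; simp only [mem_setOf_eq, mem_empty_iff_false, iff_false, not_lt]
      exact (mto_F_pos hF hFm x).le
    simp [he, he']
  rcases eq_or_lt_of_le hu1 with h1 | h1
  · subst h1
    have he : {x | F x ≤ (1:ℝ)} = univ := by
      ext x; simp only [mem_setOf_eq, mem_univ, iff_true]
      exact (mto_F_lt_one hF hFm x).le
    have he' : {x | F x < (1:ℝ)} = univ := by
      ext x; simp only [mem_setOf_eq, mem_univ, iff_true]
      exact mto_F_lt_one hF hFm x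
    simp [he, he']
  -- now 0 < u < 1, find x₀ with F x₀ = u
  have hμcdf : F = (cdf μ : ℝ → ℝ) := mto_G_eq hF
  obtain ⟨x₁, hx₁⟩ : ∃ x₁, F x₁ < u := by
    rw [hμcdf]
    exact ((tendsto_cdf_atBot μ).eventually_lt_const h0).exists
  obtain ⟨x₂, hx₂⟩ : ∃ x₂, u < F x₂ := by
    rw [hμcdf]
    exact ((tendsto_cdf_atTop μ).eventually_const_lt h1).exists
  have hx₁₂ : x₁ ≤ x₂ := by
    by_contra hc
    push_neg at hc
    exact absurd (hFm hc) (by linarith)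
  obtain ⟨x₀, _, hFx₀⟩ := intermediate_value_Icc hx₁₂ hFc.continuousOn
    (show u ∈ Icc (F x₁) (F x₂) from ⟨hx₁.le, hx₂.le⟩)
  have hle : {x | F x ≤ u} = Iic x₀ := by
    ext x
    simp only [mem_setOf_eq, mem_Iic, ← hFx₀]
    exact ⟨fun h => (hFm.le_iff_le).mp h, fun h => hFm.monotone h⟩
  have hlt : {x | F x < u} = Iio x₀ := by
    ext x
    simp only [mem_setOf_eq, mem_Iio, ← hFx₀]
    exact hFm.lt_iff_lt
  have hIic : μ (Iic x₀) = ENNReal.ofReal u := by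
    rw [← hFx₀, hF, ENNReal.ofReal_toReal (measure_ne_top μ _)]
  have hIio : μ (Iio x₀) = ENNReal.ofReal u := by
    have : μ (Iic x₀) = μ (Iio x₀) + μ {x₀} := by
      rw [← measure_union (by simp) (by simp), Iio_union_right]
    rw [mto_measure_singleton hF hFc x₀, add_zero] at this
    rw [← this, hIic]
  rw [hle, hlt]
  exact ⟨hIic, hIio⟩

lemma mto_measurable_T {μ ν : Measure ℝ} [IsProbabilityMeasure μ] [IsProbabilityMeasure ν]
    {F G Ginv T : ℝ → ℝ}
    (hF : ∀ x, F x = (μ (Iic x)).toReal) (hG : ∀ x, G x = (ν (Iic x)).toReal)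
    (hFm : StrictMono F) (hGinv : ∀ u, Ginv u = sInf {z : ℝ | G z > u})
    (hT : T = Ginv ∘ F) : Measurable T :=
  (mto_monotone_T hF hG hFm hGinv hT).measurable

/-- The monotone rearrangement pushes μ to ν. -/
lemma mto_map_T {μ ν : Measure ℝ} [IsProbabilityMeasure μ] [IsProbabilityMeasure ν]
    {F G Ginv T : ℝ → ℝ}
    (hF : ∀ x, F x = (μ (Iic x)).toReal) (hG : ∀ x, G x = (ν (Iic x)).toReal)
    (hFc : Continuous F) (hFm : StrictMono F)
    (hGinv : ∀ u, Ginv u = sInf {z : ℝ | G z > u})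
    (hT : T = Ginv ∘ F) : μ.map T = ν := by
  have hTm := mto_measurable_T hF hG hFm hGinv hT
  haveI : IsProbabilityMeasure (μ.map T) := Measure.isProbabilityMeasure_map hTm.aemeasurable
  refine Measure.ext_of_Iic _ _ (fun y => ?_)
  rw [Measure.map_apply hTm measurableSet_Iic]
  have hGy0 : 0 ≤ G y := by rw [hG]; positivity
  have hGy1 : G y ≤ 1 := by
    rw [hG]; exact ENNReal.toReal_le_of_le_ofReal zero_le_one (by simpa using prob_le_one)
  obtain ⟨hle, hlt⟩ := mto_uniform hF hFc hFm hGy0 hGy1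
  have h1 : {x | F x < G y} ⊆ T ⁻¹' Iic y := by
    intro x hx
    simp only [mem_preimage, mem_Iic, hT, Function.comp_apply]
    exact mto_A1 hF hG hFm hGinv hx
  have h2 : T ⁻¹' Iic y ⊆ {x | F x ≤ G y} := by
    intro x hx
    simp only [mem_preimage, mem_Iic, hT, Function.comp_apply] at hx
    exact mto_A2 hF hG hFm hGinv hx
  have hνy : ν (Iic y) = ENNReal.ofReal (G y) := by
    rw [hG, ENNReal.ofReal_toReal (measure_ne_top ν _)]
  refine le_antisymm ?_ ?_
  · calc μ (T ⁻¹' Iic y) ≤ μ {x | F x ≤ G y} := measure_mono h2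
    _ = ENNReal.ofReal (G y) := hle
    _ = ν (Iic y) := hνy.symm
  · calc ν (Iic y) = ENNReal.ofReal (G y) := hνy
    _ = μ {x | F x < G y} := hlt.symm
    _ ≤ μ (T ⁻¹' Iic y) := measure_mono h1

lemma mto_interval (a b x : ℝ) :
    ∫ y in a..b, (y - x) = ((b - x) ^ 2 - (a - x) ^ 2) / 2 := by
  have h1 : IntervalIntegrable (fun y : ℝ => y) volume a b :=
    continuous_id.intervalIntegrable _ _
  rw [intervalIntegral.integral_sub h1 intervalIntegrable_const,
    integral_id, intervalIntegral.integral_const]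
  simp only [smul_eq_mul]
  ring

lemma mto_indicator_eq (a b x : ℝ) :
    (fun y => (y - x) * (Ioc a b).indicator 1 y) = (Ioc a b).indicator (fun y => y - x) := by
  funext y
  by_cases h : y ∈ Ioc a b <;> simp [h]

lemma mto_indicator_integrable (a b x : ℝ) :
    Integrable ((Ioc a b).indicator (fun y => y - x)) volume := by
  refine (IntegrableOn.integrable_indicator ?_ measurableSet_Ioc)
  exact (continuous_id.sub continuous_const).integrableOn_Ioc

/-- per-x identity. -/
lemma mto_per_x (t s x : ℝ) :
    ∫ y, (y - x) * ((Ioc t s).indicator 1 y - (Ioc s t).indicator 1 y)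
      = ((x - s) ^ 2 - (x - t) ^ 2) / 2 := by
  have heq : (fun y => (y - x) * ((Ioc t s).indicator 1 y - (Ioc s t).indicator 1 y))
      = fun y => (Ioc t s).indicator (fun y => y - x) y - (Ioc s t).indicator (fun y => y - x) y := by
    funext y
    rw [mul_sub, ← mto_indicator_eq t s x, ← mto_indicator_eq s t x]
  rw [heq, integral_sub (mto_indicator_integrable t s x) (mto_indicator_integrable s t x),
    integral_indicator measurableSet_Ioc, integral_indicator measurableSet_Ioc]
  rcases le_total t s with h | h
  · rw [Ioc_eq_empty (not_lt.mpr h)]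
    simp only [Measure.restrict_empty, integral_zero_measure, sub_zero]
    rw [← intervalIntegral.integral_of_le h, mto_interval]
    ring_nf
  · rw [Ioc_eq_empty (not_lt.mpr h)]
    simp only [Measure.restrict_empty, integral_zero_measure, zero_sub]
    rw [← intervalIntegral.integral_of_le h, mto_interval]
    ring_nf

lemma mto_abs_L1 {μ : Measure ℝ} [IsProbabilityMeasure μ] {T : ℝ → ℝ} (hTm : Measurable T)
    (hTint : Integrable (fun x => (x - T x) ^ 2) μ) :
    Integrable (fun x => |x - T x|) μ := by
  refine Integrable.mono' ((hTint.add (integrable_const 1)).div_const 2)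
    ((measurable_id.sub hTm).abs).aestronglyMeasurable ?_
  filter_upwards with x
  simp only [Pi.add_apply, Real.norm_eq_abs, abs_abs]
  nlinarith [sq_nonneg (|x - T x| - 1), sq_abs (x - T x)]

lemma mto_per_y {μ : Measure ℝ} [IsProbabilityMeasure μ] {T S : ℝ → ℝ}
    (hTmono : Monotone T) (hTm : Measurable T) (hSm : Measurable S)
    (hmap : μ.map T = μ.map S)
    (hTint : Integrable (fun x => (x - T x) ^ 2) μ)
    (hSint : Integrable (fun x => (x - S x) ^ 2) μ) (y : ℝ) :
    0 ≤ ∫ x, (y - x) * ((Ioc (T x) (S x)).indicator 1 y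
        - (Ioc (S x) (T x)).indicator 1 y) ∂μ := by
  set A : Set ℝ := {x | T x < y ∧ y ≤ S x} with hA
  set B : Set ℝ := {x | S x < y ∧ y ≤ T x} with hB
  have hAmeas : MeasurableSet A :=
    (measurableSet_lt hTm measurable_const).inter (measurableSet_le measurable_const hSm)
  have hBmeas : MeasurableSet B :=
    (measurableSet_lt hSm measurable_const).inter (measurableSet_le measurable_const hTm)
  -- rewrite integrand
  have heq : (fun x => (y - x) * ((Ioc (T x) (S x)).indicator 1 y
      - (Ioc (S x) (T x)).indicator 1 y))
      = fun x => A.indicator (fun x => y - x) x - B.indicator (fun x => y - x) x := by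
    funext x
    by_cases h1 : T x < y ∧ y ≤ S x <;> by_cases h2 : S x < y ∧ y ≤ T x
    · exact absurd (h1.1.trans_le h2.2) (lt_irrefl _)
    · simp [Set.indicator, Set.mem_Ioc, hA, hB, h1, h2]
    · simp [Set.indicator, Set.mem_Ioc, hA, hB, h1, h2]
    · simp [Set.indicator, Set.mem_Ioc, hA, hB, h1, h2]
  rw [heq]
  -- integrability of pieces
  have hD : Integrable (fun x => |x - T x| + |x - S x|) μ :=
    (mto_abs_L1 hTm hTint).add (mto_abs_L1 hSm hSint)
  have hboundA : ∀ x ∈ A, |y - x| ≤ |x - T x| + |x - S x| := by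
    intro x hx
    obtain ⟨hx1, hx2⟩ := hx
    rw [abs_le]
    constructor
    · linarith [le_abs_self (x - T x), abs_nonneg (x - S x)]
    · linarith [neg_abs_le (x - S x), abs_nonneg (x - T x)]
  have hboundB : ∀ x ∈ B, |y - x| ≤ |x - T x| + |x - S x| := by
    intro x hx
    obtain ⟨hx1, hx2⟩ := hx
    rw [abs_le]
    constructor
    · linarith [le_abs_self (x - S x), abs_nonneg (x - T x)]
    · linarith [neg_abs_le (x - T x), abs_nonneg (x - S x)]
  have hintA : Integrable (A.indicator fun x => y - x) μ := by
    refine hD.mono' (((measurable_const.sub measurable_id).indicator hAmeas).aestronglyMeasurable) ?_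
    filter_upwards with x
    rw [Real.norm_eq_abs]
    by_cases hx : x ∈ A
    · rw [Set.indicator_of_mem hx]; exact hboundA x hx
    · rw [Set.indicator_of_notMem hx]
      simp only [abs_zero]
      positivity
  have hintB : Integrable (B.indicator fun x => y - x) μ := by
    refine hD.mono' (((measurable_const.sub measurable_id).indicator hBmeas).aestronglyMeasurable) ?_
    filter_upwards with x
    rw [Real.norm_eq_abs]
    by_cases hx : x ∈ B
    · rw [Set.indicator_of_mem hx]; exact hboundB x hx
    · rw [Set.indicator_of_notMem hx]
      simp only [abs_zero]
      positivity
  rw [integral_sub hintA hintB]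
  -- equal measures of A and B
  set L : Set ℝ := {x | T x < y} with hLdef
  set K : Set ℝ := {x | S x < y} with hKdef
  have hLmeas : MeasurableSet L := measurableSet_lt hTm measurable_const
  have hKmeas : MeasurableSet K := measurableSet_lt hSm measurable_const
  have hLK : μ L = μ K := by
    have h1 : L = T ⁻¹' (Iio y) := rfl
    have h2 : K = S ⁻¹' (Iio y) := rfl
    rw [h1, h2, ← Measure.map_apply hTm measurableSet_Iio,
      ← Measure.map_apply hSm measurableSet_Iio, hmap]
  have hAeq : A = L \ K := by
    ext x
    simp only [hA, hLdef, hKdef, mem_setOf_eq, mem_diff, not_lt]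
  have hBeq : B = K \ L := by
    ext x
    simp only [hB, hLdef, hKdef, mem_setOf_eq, mem_diff, not_lt]
  have hABμ : μ A = μ B := by
    have h1 : μ (L ∩ K) + μ (L \ K) = μ L := measure_inter_add_diff L hKmeas
    have h2 : μ (K ∩ L) + μ (K \ L) = μ K := measure_inter_add_diff K hLmeas
    rw [inter_comm K L] at h2
    rw [hAeq, hBeq]
    have := h1.trans (hLK.trans h2.symm)
    exact (ENNReal.add_right_inj (measure_ne_top μ _)).mp this
  -- useful: if μ A = 0 then both integrals vanish
  have hzero : μ A = 0 → 0 ≤ ∫ x, A.indicator (fun x => y - x) x ∂μ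
      - ∫ x, B.indicator (fun x => y - x) x ∂μ := by
    intro hA0
    have hB0 : μ B = 0 := by rw [← hABμ]; exact hA0
    have e1 : ∫ x, A.indicator (fun x => y - x) x ∂μ = 0 := by
      rw [integral_indicator hAmeas, setIntegral_measure_zero _ hA0]
    have e2 : ∫ x, B.indicator (fun x => y - x) x ∂μ = 0 := by
      rw [integral_indicator hBmeas, setIntegral_measure_zero _ hB0]
    rw [e1, e2]; norm_num
  have hlower : IsLowerSet L := by
    intro x' x hxx' hx'
    exact lt_of_le_of_lt (hTmono hxx') hx'
  by_cases hLne : L = ∅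
  · refine hzero ?_
    refine measure_mono_null ?_ (by simp [hLne] : μ L = 0)
    rw [hAeq]; exact diff_subset
  by_cases hbdd : BddAbove L
  · -- main case
    set a : ℝ := sSup L with ha
    have hLne' : L.Nonempty := nonempty_iff_ne_empty.mpr hLne
    have hAle : ∀ x ∈ A, x ≤ a := by
      intro x hx
      exact le_csSup hbdd hx.1
    have hBge : ∀ x ∈ B, a ≤ x := by
      intro x hx
      refine csSup_le hLne' (fun z hz => ?_)
      by_contra hc
      push_neg at hc
      have : z ∈ L := hz
      have hxL : x ∈ L := hlower hc.le this
      exact absurd hxL (by simp only [hLdef, mem_setOf_eq, not_lt]; exact hx.2)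
    -- split the integrals
    have hsplit : ∀ (C : Set ℝ), MeasurableSet C → Integrable (C.indicator fun x => y - x) μ →
        ∫ x, C.indicator (fun x => y - x) x ∂μ
          = (μ C).toReal * (y - a) + ∫ x, C.indicator (fun x => a - x) x ∂μ := by
      intro C hCmeas hCint
      have hsum : (C.indicator fun x => y - x)
          = fun x => C.indicator (fun _ => y - a) x + C.indicator (fun x => a - x) x := by
        funext x
        by_cases hx : x ∈ C <;> simp [hx]
      have hint1 : Integrable (C.indicator fun _ : ℝ => y - a) μ :=
        (integrable_const (y - a)).indicator hCmeas
      have hint2 : Integrable (C.indicator fun x => a - x) μ := by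
        have : (C.indicator fun x => a - x)
            = fun x => C.indicator (fun x => y - x) x + C.indicator (fun _ => a - y) x := by
          funext x
          by_cases hx : x ∈ C <;> simp [hx]
        rw [this]
        exact hCint.add ((integrable_const (a - y)).indicator hCmeas)
      rw [hsum, integral_add hint1 hint2, integral_indicator_const _ hCmeas]
      simp [smul_eq_mul, mul_comm, measureReal_def]
    have hposA : 0 ≤ ∫ x, A.indicator (fun x => a - x) x ∂μ := by
      refine integral_nonneg (fun x => ?_)
      simp only [Pi.zero_apply]
      by_cases hx : x ∈ A
      · rw [Set.indicator_of_mem hx]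
        have := hAle x hx; linarith
      · rw [Set.indicator_of_notMem hx]
    have hnegB : ∫ x, B.indicator (fun x => a - x) x ∂μ ≤ 0 := by
      refine integral_nonpos (fun x => ?_)
      simp only [Pi.zero_apply]
      by_cases hx : x ∈ B
      · rw [Set.indicator_of_mem hx]
        have := hBge x hx; linarith
      · rw [Set.indicator_of_notMem hx]
    rw [hsplit A hAmeas hintA, hsplit B hBmeas hintB, hABμ]
    linarith
  · -- L unbounded above: L = univ, so B = ∅ and μ A = μ B = 0
    have hLuniv : L = univ := by
      ext x
      simp only [mem_univ, iff_true]
      rw [not_bddAbove_iff] at hbdd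
      obtain ⟨z, hzL, hxz⟩ := hbdd x
      exact hlower hxz.le hzL
    refine hzero ?_
    rw [hABμ, hBeq, hLuniv]
    simp

lemma mto_prod_integrable {μ : Measure ℝ} [IsProbabilityMeasure μ] {T S : ℝ → ℝ}
    (hTm : Measurable T) (hSm : Measurable S)
    (hTint : Integrable (fun x => (x - T x) ^ 2) μ)
    (hSint : Integrable (fun x => (x - S x) ^ 2) μ) :
    Integrable (fun p : ℝ × ℝ => (p.2 - p.1) * ((Ioc (T p.1) (S p.1)).indicator 1 p.2
      - (Ioc (S p.1) (T p.1)).indicator 1 p.2)) (μ.prod volume) := by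
  have hset1 : MeasurableSet {q : ℝ × ℝ | T q.1 < q.2 ∧ q.2 ≤ S q.1} :=
    (measurableSet_lt (hTm.comp measurable_fst) measurable_snd).inter
      (measurableSet_le measurable_snd (hSm.comp measurable_fst))
  have hset2 : MeasurableSet {q : ℝ × ℝ | S q.1 < q.2 ∧ q.2 ≤ T q.1} :=
    (measurableSet_lt (hSm.comp measurable_fst) measurable_snd).inter
      (measurableSet_le measurable_snd (hTm.comp measurable_fst))
  have hind1 : (fun p : ℝ × ℝ => (Ioc (T p.1) (S p.1)).indicator (1 : ℝ → ℝ) p.2)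
      = {q : ℝ × ℝ | T q.1 < q.2 ∧ q.2 ≤ S q.1}.indicator (fun _ => (1:ℝ)) := by
    funext p
    by_cases h : T p.1 < p.2 ∧ p.2 ≤ S p.1 <;>
      simp [Set.indicator, Set.mem_Ioc, h]
  have hind2 : (fun p : ℝ × ℝ => (Ioc (S p.1) (T p.1)).indicator (1 : ℝ → ℝ) p.2)
      = {q : ℝ × ℝ | S q.1 < q.2 ∧ q.2 ≤ T q.1}.indicator (fun _ => (1:ℝ)) := by
    funext p
    by_cases h : S p.1 < p.2 ∧ p.2 ≤ T p.1 <;>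
      simp [Set.indicator, Set.mem_Ioc, h]
  have hmeas : Measurable (fun p : ℝ × ℝ => (p.2 - p.1) * ((Ioc (T p.1) (S p.1)).indicator 1 p.2
      - (Ioc (S p.1) (T p.1)).indicator 1 p.2)) := by
    refine (measurable_snd.sub measurable_fst).mul (Measurable.sub ?_ ?_)
    · rw [show (fun p : ℝ × ℝ => (Ioc (T p.1) (S p.1)).indicator (1 : ℝ → ℝ) p.2)
        = {q : ℝ × ℝ | T q.1 < q.2 ∧ q.2 ≤ S q.1}.indicator (fun _ => (1:ℝ)) from hind1]
      exact measurable_const.indicator hset1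
    · rw [show (fun p : ℝ × ℝ => (Ioc (S p.1) (T p.1)).indicator (1 : ℝ → ℝ) p.2)
        = {q : ℝ × ℝ | S q.1 < q.2 ∧ q.2 ≤ T q.1}.indicator (fun _ => (1:ℝ)) from hind2]
      exact measurable_const.indicator hset2
  rw [integrable_prod_iff hmeas.aestronglyMeasurable]
  constructor
  · filter_upwards with x
    have : (fun y => (y - x) * ((Ioc (T x) (S x)).indicator 1 y - (Ioc (S x) (T x)).indicator 1 y))
        = fun y => (Ioc (T x) (S x)).indicator (fun y => y - x) y
            - (Ioc (S x) (T x)).indicator (fun y => y - x) y := by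
      funext y
      rw [mul_sub, ← mto_indicator_eq, ← mto_indicator_eq]
    rw [this]; exact (mto_indicator_integrable (T x) (S x) x).sub
      (mto_indicator_integrable (S x) (T x) x)
  · -- bound the inner norm integral
    set D : ℝ → ℝ := fun x => |x - T x| + |x - S x| with hD
    have hDnn : ∀ x, 0 ≤ D x := fun x => by positivity
    have hptbd : ∀ x y, ‖(y - x) * ((Ioc (T x) (S x)).indicator 1 y
        - (Ioc (S x) (T x)).indicator 1 y)‖
        ≤ (Icc (min (T x) (S x)) (max (T x) (S x))).indicator (fun _ => D x) y := by
      intro x y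
      by_cases h1 : y ∈ Ioc (T x) (S x) <;> by_cases h2 : y ∈ Ioc (S x) (T x)
      · exact absurd (h1.1.trans_le h2.2) (lt_irrefl _)
      · have hy : y ∈ Icc (min (T x) (S x)) (max (T x) (S x)) :=
          ⟨le_trans (min_le_left _ _) h1.1.le, le_trans h1.2 (le_max_right _ _)⟩
        rw [Set.indicator_of_mem hy]
        simp only [Set.indicator_of_mem h1, Set.indicator_of_notMem h2, Pi.one_apply,
          sub_zero, mul_one, Real.norm_eq_abs]
        rw [abs_sub_comm, show D x = |x - T x| + |x - S x| from rfl, abs_le]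
        obtain ⟨hy1, hy2⟩ := h1
        constructor
        · linarith [neg_abs_le (x - S x), abs_nonneg (x - T x)]
        · linarith [le_abs_self (x - T x), abs_nonneg (x - S x)]
      · have hy : y ∈ Icc (min (T x) (S x)) (max (T x) (S x)) :=
          ⟨le_trans (min_le_right _ _) h2.1.le, le_trans h2.2 (le_max_left _ _)⟩
        rw [Set.indicator_of_mem hy]
        simp only [Set.indicator_of_mem h2, Set.indicator_of_notMem h1, Pi.one_apply,
          zero_sub, mul_neg, mul_one, norm_neg, Real.norm_eq_abs]
        rw [abs_sub_comm, show D x = |x - T x| + |x - S x| from rfl, abs_le]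
        obtain ⟨hy1, hy2⟩ := h2
        constructor
        · linarith [neg_abs_le (x - T x), abs_nonneg (x - S x)]
        · linarith [le_abs_self (x - S x), abs_nonneg (x - T x)]
      · simp only [Set.indicator_of_notMem h1, Set.indicator_of_notMem h2, sub_zero,
          mul_zero, norm_zero]
        exact Set.indicator_nonneg (fun _ _ => hDnn x) y
    have hbd2 : ∀ x, ∫ y, ‖(y - x) * ((Ioc (T x) (S x)).indicator 1 y
        - (Ioc (S x) (T x)).indicator 1 y)‖ ≤ 2 * ((x - T x) ^ 2 + (x - S x) ^ 2) := by
      intro x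
      have hIccInt : Integrable
          ((Icc (min (T x) (S x)) (max (T x) (S x))).indicator (fun _ : ℝ => D x)) volume := by
        refine IntegrableOn.integrable_indicator ?_ measurableSet_Icc
        exact integrableOn_const measure_Icc_lt_top.ne
      have hnormInt : Integrable (fun y => ‖(y - x) * ((Ioc (T x) (S x)).indicator 1 y
          - (Ioc (S x) (T x)).indicator 1 y)‖) volume := by
        have : (fun y => (y - x) * ((Ioc (T x) (S x)).indicator 1 y
            - (Ioc (S x) (T x)).indicator 1 y))
            = fun y => (Ioc (T x) (S x)).indicator (fun y => y - x) y
                - (Ioc (S x) (T x)).indicator (fun y => y - x) y := by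
          funext y
          rw [mul_sub, ← mto_indicator_eq, ← mto_indicator_eq]
        have base : Integrable (fun y => (y - x) * ((Ioc (T x) (S x)).indicator 1 y
            - (Ioc (S x) (T x)).indicator 1 y)) volume := by
          rw [this]
          exact (mto_indicator_integrable (T x) (S x) x).sub
            (mto_indicator_integrable (S x) (T x) x)
        exact base.norm
      calc ∫ y, ‖(y - x) * ((Ioc (T x) (S x)).indicator 1 y
            - (Ioc (S x) (T x)).indicator 1 y)‖
          ≤ ∫ y, (Icc (min (T x) (S x)) (max (T x) (S x))).indicator (fun _ => D x) y :=
            integral_mono hnormInt hIccInt (hptbd x)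
        _ = (volume (Icc (min (T x) (S x)) (max (T x) (S x)))).toReal * D x := by
            rw [integral_indicator_const _ measurableSet_Icc, smul_eq_mul, measureReal_def]
        _ ≤ 2 * ((x - T x) ^ 2 + (x - S x) ^ 2) := by
            rw [Real.volume_Icc, ENNReal.toReal_ofReal (by
              simp [min_le_max, sub_nonneg])]
            have h1 : max (T x) (S x) - min (T x) (S x) ≤ D x := by
              rcases le_total (T x) (S x) with h | h
              · rw [max_eq_right h, min_eq_left h,
                  show D x = |x - T x| + |x - S x| from rfl]
                linarith [le_abs_self (x - T x), neg_abs_le (x - S x)]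
              · rw [max_eq_left h, min_eq_right h,
                  show D x = |x - T x| + |x - S x| from rfl]
                linarith [le_abs_self (x - S x), neg_abs_le (x - T x)]
            have h2 : D x * D x ≤ 2 * ((x - T x) ^ 2 + (x - S x) ^ 2) := by
              rw [show D x = |x - T x| + |x - S x| from rfl]
              nlinarith [sq_abs (x - T x), sq_abs (x - S x), sq_nonneg (|x - T x| - |x - S x|)]
            nlinarith [hDnn x, h1]
    refine Integrable.mono' ((hTint.add hSint).const_mul 2)
      (hmeas.norm.aestronglyMeasurable.integral_prod_right') ?_
    filter_upwards with x
    rw [Real.norm_eq_abs, abs_of_nonneg (integral_nonneg (fun y => norm_nonneg _))]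
    simpa using hbd2 x

/-- Optimality of the monotone map for the quadratic cost: among all maps `S` pushing
`μ` to `ν`, the map `T = G⁻¹ ∘ F` minimizes `∫ |x - S x|² dμ`. -/
theorem monotone_transport_optimal (μ ν : Measure ℝ)
    [IsProbabilityMeasure μ] [IsProbabilityMeasure ν]
    (F G : ℝ → ℝ) (hF : ∀ x, F x = (μ (Iic x)).toReal) (hG : ∀ x, G x = (ν (Iic x)).toReal)
    (hFc : Continuous F) (hFm : StrictMono F)
    (Ginv : ℝ → ℝ) (hGinv : ∀ u, Ginv u = sInf {z : ℝ | G z > u})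
    (T : ℝ → ℝ) (hT : T = Ginv ∘ F)
    (hTint : Integrable (fun x => (x - T x) ^ 2) μ) :
    ∀ S : ℝ → ℝ, Measurable S → μ.map S = ν →
      Integrable (fun x => (x - S x) ^ 2) μ →
      ∫ x, (x - T x) ^ 2 ∂μ ≤ ∫ x, (x - S x) ^ 2 ∂μ := by
  intro S hSmeas hSmap hSint
  have hTmono := mto_monotone_T hF hG hFm hGinv hT
  have hTm := mto_measurable_T hF hG hFm hGinv hT
  have hmapT : μ.map T = ν := mto_map_T hF hG hFc hFm hGinv hT
  have hmap : μ.map T = μ.map S := by rw [hmapT, hSmap]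
  have hprod := mto_prod_integrable (μ := μ) hTm hSmeas hTint hSint
  have hswap : ∫ x, ∫ y, (y - x) * ((Ioc (T x) (S x)).indicator 1 y
        - (Ioc (S x) (T x)).indicator 1 y) ∂volume ∂μ
      = ∫ y, ∫ x, (y - x) * ((Ioc (T x) (S x)).indicator 1 y
        - (Ioc (S x) (T x)).indicator 1 y) ∂μ ∂volume :=
    integral_integral_swap hprod
  have hkey : 0 ≤ ∫ x, (((x - S x) ^ 2 - (x - T x) ^ 2) / 2) ∂μ := by
    have hcong : ∫ x, (((x - S x) ^ 2 - (x - T x) ^ 2) / 2) ∂μ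
        = ∫ x, ∫ y, (y - x) * ((Ioc (T x) (S x)).indicator 1 y
            - (Ioc (S x) (T x)).indicator 1 y) ∂volume ∂μ := by
      refine integral_congr_ae (Filter.Eventually.of_forall fun x => ?_)
      exact (mto_per_x (T x) (S x) x).symm
    rw [hcong, hswap]
    refine integral_nonneg fun y => ?_
    simpa using mto_per_y hTmono hTm hSmeas hmap hTint hSint y
  have hsub : ∫ x, (((x - S x) ^ 2 - (x - T x) ^ 2) / 2) ∂μ
      = (∫ x, (x - S x) ^ 2 ∂μ - ∫ x, (x - T x) ^ 2 ∂μ) / 2 := by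
    rw [integral_div, integral_sub hSint hTint]
  rw [hsub] at hkey
  linarith
end
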